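/- Consider the discrete-time control system and let V : ℝ^n → ℝ be a generalized discrete-time control Lyapunov function of order m (case q = 0) whose weights σ_1, …, σ_m are all strictly positive. Then there exists a control strategy rendering the origin asymptotically stable; precisely: (a) for every ε > 0 there exists δ > 0 such that every x^0 ∈ X with 0 < ‖x^0‖ < δ admits an infinite feasible control sequence whose trajectory satisfies ‖x^k‖ < ε for all k ∈ ℕ and x^k → 0 as k → ∞, and (b) every x^0 ∈ X admits an infinite feasible control sequence whose trajectory satisfies x^k → 0 as k → ∞. -/

import Mathlib

open Filter Topology

/-- A function `W` on a normed space is positive definite if `W 0 = 0` and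
`W z > 0` for all `z ≠ 0`. -/
def PosDef {E : Type*} [NormedAddCommGroup E] (W : E → ℝ) : Prop :=
  W 0 = 0 ∧ ∀ z : E, z ≠ 0 → 0 < W z

/-- A function `W` is radially unbounded if `W z → ∞` as `‖z‖ → ∞`. -/
def RadUnbounded {E : Type*} [NormedAddCommGroup E] (W : E → ℝ) : Prop :=
  ∀ c : ℝ, ∃ R : ℝ, ∀ z : E, R ≤ ‖z‖ → c ≤ W z

/-- The trajectory of the control system `x^{k+1} = f(x^k, u^k)` started at `x0`
and driven by the input sequence `u`. -/
def traj {n p : ℕ} (f : (Fin n → ℝ) → (Fin p → ℝ) → Fin n → ℝ)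
    (x0 : Fin n → ℝ) (u : ℕ → Fin p → ℝ) : ℕ → Fin n → ℝ
  | 0 => x0
  | k + 1 => f (traj f x0 u k) (u k)

/-- Extension of a finite control sequence by zero. -/
def extCtrl {p q : ℕ} (u : Fin q → Fin p → ℝ) : ℕ → Fin p → ℝ :=
  fun k => if h : k < q then u ⟨k, h⟩ else 0

/-- The window `(ν_l, …, ν_{l+q-1})` of an infinite control sequence. -/
def window {p : ℕ} (ν : ℕ → Fin p → ℝ) (l q : ℕ) : Fin q → Fin p → ℝ :=
  fun i => ν (l + (i : ℕ))

/-- The set of feasible controls `U_{[0:q-1]}(x)`: sequences of `q` inputs in `U`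
whose generated states stay in `X`. -/
def FeasCtrl {n p : ℕ} (f : (Fin n → ℝ) → (Fin p → ℝ) → Fin n → ℝ)
    (X : Set (Fin n → ℝ)) (U : Set (Fin p → ℝ)) (q : ℕ) (x : Fin n → ℝ) :
    Set (Fin q → Fin p → ℝ) :=
  {u | ∀ j : Fin q, u j ∈ U ∧ traj f x (extCtrl u) ((j : ℕ) + 1) ∈ X}

/-- if `V` is a g-dclf of order `m` (case `q = 0`) with strictly positive
weights, there is a control strategy rendering the origin asymptotically stable:
(a) for every `ε > 0` there is `δ > 0` such that every `x0 ∈ X` with `0 < ‖x0‖ < δ`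
admits an infinite feasible control whose trajectory stays in the `ε`-ball and
converges to zero, and (b) every `x0 ∈ X` admits an infinite feasible control whose
trajectory converges to zero. -/
lemma posdef_nonneg {E : Type*} [NormedAddCommGroup E] {W : E → ℝ} (h : PosDef W) (z : E) :
    0 ≤ W z := by
  rcases eq_or_ne z 0 with rfl | hz
  · simp [h.1]
  · exact (h.2 z hz).le

lemma aux_min {n : ℕ} {α : (Fin n → ℝ) → ℝ} (hc : Continuous α) (hpd : PosDef α)
    (R ε : ℝ) (hε : 0 < ε) :
    ∃ c > 0, ∀ x : Fin n → ℝ, ‖x‖ ≤ R → α x < c → ‖x‖ < ε := by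
  set K : Set (Fin n → ℝ) := Metric.closedBall 0 R \ Metric.ball 0 ε with hK
  have hKc : IsCompact K := (isCompact_closedBall 0 R).diff Metric.isOpen_ball
  rcases K.eq_empty_or_nonempty with hKe | hKne
  · refine ⟨1, one_pos, fun x hx _ => ?_⟩
    by_contra h
    push_neg at h
    have : x ∈ K := ⟨Metric.mem_closedBall.mpr (by simpa [dist_zero_right] using hx),
      fun hb => absurd (Metric.mem_ball.mp hb) (by simpa [dist_zero_right] using h)⟩
    simp [hKe] at this
  · obtain ⟨x₀, hx₀K, hmin⟩ := hKc.exists_isMinOn hKne hc.continuousOn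
    have hx₀ne : x₀ ≠ 0 := by
      intro h
      have := hx₀K.2
      simp [h, Metric.mem_ball, hε] at this
    refine ⟨α x₀, hpd.2 x₀ hx₀ne, fun x hx hαx => ?_⟩
    by_contra h
    push_neg at h
    have hxK : x ∈ K := ⟨Metric.mem_closedBall.mpr (by simpa [dist_zero_right] using hx),
      fun hb => absurd (Metric.mem_ball.mp hb) (by simpa [dist_zero_right] using h.not_gt)⟩
    exact absurd (hmin hxK) (not_le.mpr hαx)

lemma aux_tendsto {n : ℕ} {α : (Fin n → ℝ) → ℝ} (hc : Continuous α) (hpd : PosDef α)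
    (z : ℕ → Fin n → ℝ) (R : ℝ) (hb : ∀ k, ‖z k‖ ≤ R)
    (hα : Tendsto (fun k => α (z k)) atTop (nhds 0)) :
    Tendsto z atTop (nhds 0) := by
  rw [NormedAddCommGroup.tendsto_nhds_zero]
  intro ε hε
  obtain ⟨c, hc0, hcs⟩ := aux_min hc hpd R ε hε
  filter_upwards [hα.eventually_lt_const hc0] with k hk
  exact hcs _ (hb k) hk

theorem stmt_6 (n p m : ℕ) (hn : 1 ≤ n) (hp : 1 ≤ p) (hm : 1 ≤ m)
    (f : (Fin n → ℝ) → (Fin p → ℝ) → Fin n → ℝ)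
    (hf : Continuous (Function.uncurry f)) (hf0 : f 0 0 = 0)
    (X : Set (Fin n → ℝ)) (U : Set (Fin p → ℝ))
    (hX : (0 : Fin n → ℝ) ∈ interior X) (hU : (0 : Fin p → ℝ) ∈ interior U)
    (V α : (Fin n → ℝ) → ℝ)
    (hVc : Continuous V) (hVpd : PosDef V)
    (hαc : Continuous α) (hαpd : PosDef α) (hαru : RadUnbounded α)
    (σ : ℕ → ℝ) (hσpos : ∀ i ∈ Finset.Icc 1 m, 0 < σ i)
    (hσavg : 1 ≤ (∑ i ∈ Finset.Icc 1 m, σ i) / (m : ℝ))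
    (hVα : ∀ x : Fin n → ℝ, V x - α x ≥ 0)
    (hadc : ∀ x0 : Fin n → ℝ, ∃ ν : ℕ → Fin p → ℝ,
      (∀ j < m, ν j ∈ U ∧ traj f x0 ν (j + 1) ∈ X) ∧
      (∑ i ∈ Finset.Icc 1 m, σ i * V (traj f x0 ν i)) / (m : ℝ) - V x0 ≤ -α x0) :
    (∀ ε > (0 : ℝ), ∃ δ > (0 : ℝ), ∀ x0 ∈ X, 0 < ‖x0‖ → ‖x0‖ < δ →
      ∃ u : ℕ → Fin p → ℝ,
        (∀ k : ℕ, u k ∈ U ∧ traj f x0 u (k + 1) ∈ X) ∧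
        (∀ k : ℕ, ‖traj f x0 u k‖ < ε) ∧
        Filter.Tendsto (traj f x0 u) Filter.atTop (nhds 0)) ∧
    (∀ x0 ∈ X, ∃ u : ℕ → Fin p → ℝ,
      (∀ k : ℕ, u k ∈ U ∧ traj f x0 u (k + 1) ∈ X) ∧
      Filter.Tendsto (traj f x0 u) Filter.atTop (nhds 0)) := by
  classical
  have hα0 : ∀ z, 0 ≤ α z := posdef_nonneg hαpd
  have hαV : ∀ z, α z ≤ V z := fun z => by have := hVα z; linarith
  have hV0 : ∀ z, 0 ≤ V z := fun z => le_trans (hα0 z) (hαV z)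
  have hm0 : (0 : ℝ) < m := by exact_mod_cast hm
  set C : ℝ := 1 + ∑ i ∈ Finset.Icc 1 m, (m : ℝ) / σ i with hCdef
  have hsum0 : (0:ℝ) ≤ ∑ i ∈ Finset.Icc 1 m, (m:ℝ)/σ i :=
    Finset.sum_nonneg fun i hi => div_nonneg hm0.le (hσpos i hi).le
  have hC1 : 1 ≤ C := by simp only [hCdef]; linarith
  have hCσ : ∀ j ∈ Finset.Icc 1 m, (m:ℝ)/σ j ≤ C := by
    intro j hj
    have := Finset.single_le_sum (f := fun i => (m:ℝ)/σ i)
      (fun i hi => div_nonneg hm0.le (hσpos i hi).le) hj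
    simp only [hCdef]; linarith
  have key : ∀ x : Fin n → ℝ, ∃ (ν : ℕ → Fin p → ℝ) (i : ℕ), 1 ≤ i ∧ i ≤ m ∧
      (∀ j < m, ν j ∈ U ∧ traj f x ν (j + 1) ∈ X) ∧
      V (traj f x ν i) ≤ V x - α x ∧
      (∀ j ≤ m, V (traj f x ν j) ≤ C * V x) := by
    intro x
    obtain ⟨ν, hfeas, hsum⟩ := hadc x
    have hD : 0 ≤ V x - α x := hVα x
    have hsum' : ∑ i ∈ Finset.Icc 1 m, σ i * V (traj f x ν i) ≤ (V x - α x) * (m:ℝ) := by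
      have h1 : (∑ i ∈ Finset.Icc 1 m, σ i * V (traj f x ν i)) / (m:ℝ) ≤ V x - α x := by
        linarith
      exact (div_le_iff₀ hm0).mp h1
    have hexists : ∃ i ∈ Finset.Icc 1 m, V (traj f x ν i) ≤ V x - α x := by
      by_contra hcon
      push_neg at hcon
      have hσm : (m:ℝ) ≤ ∑ i ∈ Finset.Icc 1 m, σ i := by
        have := (le_div_iff₀ hm0).mp hσavg; linarith
      have h2 : (m:ℝ) * (V x - α x) ≤ (∑ i ∈ Finset.Icc 1 m, σ i) * (V x - α x) :=
        mul_le_mul_of_nonneg_right hσm hD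
      have h3 : (∑ i ∈ Finset.Icc 1 m, σ i) * (V x - α x)
          < ∑ i ∈ Finset.Icc 1 m, σ i * V (traj f x ν i) := by
        rw [Finset.sum_mul]
        refine Finset.sum_lt_sum_of_nonempty (Finset.nonempty_Icc.mpr hm) fun i hi => ?_
        exact mul_lt_mul_of_pos_left (hcon i hi) (hσpos i hi)
      nlinarith
    obtain ⟨i0, hi0mem, hi0⟩ := hexists
    rw [Finset.mem_Icc] at hi0mem
    refine ⟨ν, i0, hi0mem.1, hi0mem.2, hfeas, hi0, ?_⟩
    intro j hj
    rcases Nat.eq_zero_or_pos j with rfl | hj1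
    · show V (traj f x ν 0) ≤ C * V x
      have : traj f x ν 0 = x := rfl
      rw [this]
      nlinarith [hV0 x]
    · have hjm : j ∈ Finset.Icc 1 m := Finset.mem_Icc.mpr ⟨hj1, hj⟩
      have h4 : σ j * V (traj f x ν j) ≤ ∑ i ∈ Finset.Icc 1 m, σ i * V (traj f x ν i) :=
        Finset.single_le_sum (f := fun i => σ i * V (traj f x ν i))
          (fun i hi => mul_nonneg (hσpos i hi).le (hV0 _)) hjm
      have h5 : σ j * V (traj f x ν j) ≤ (m:ℝ) * V x := by nlinarith [hα0 x]
      have hσj := hσpos j hjm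
      have h6 : V (traj f x ν j) ≤ ((m:ℝ) / σ j) * V x := by
        rw [div_mul_eq_mul_div, le_div_iff₀ hσj]
        nlinarith
      have h7 : ((m:ℝ)/σ j) * V x ≤ C * V x :=
        mul_le_mul_of_nonneg_right (hCσ j hjm) (hV0 x)
      exact h6.trans h7
  choose ν ii hii1 hiim hfeas hdec hbd using key
  have main : ∀ x0 : Fin n → ℝ, ∃ u : ℕ → Fin p → ℝ,
      (∀ k : ℕ, u k ∈ U ∧ traj f x0 u (k + 1) ∈ X) ∧
      (∀ k : ℕ, α (traj f x0 u k) ≤ C * V x0) ∧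
      Tendsto (traj f x0 u) atTop (nhds 0) := by
    intro x0
    set step : (Fin n → ℝ) → Fin n → ℝ := fun y => traj f y (ν y) (ii y) with hstepdef
    set Y : ℕ → Fin n → ℝ := fun k => step^[k] x0 with hYdef
    have hY0 : Y 0 = x0 := rfl
    have hYS : ∀ k, Y (k + 1) = traj f (Y k) (ν (Y k)) (ii (Y k)) := by
      intro k
      simp only [hYdef, Function.iterate_succ_apply', hstepdef]
    set T : ℕ × ℕ → ℕ × ℕ :=
      fun st => if st.2 + 1 = ii (Y st.1) then (st.1 + 1, 0) else (st.1, st.2 + 1) with hTdef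
    set s : ℕ → ℕ × ℕ := fun t => T^[t] (0, 0) with hsdef
    have hs0 : s 0 = (0, 0) := rfl
    have hsS : ∀ t, s (t + 1) = T (s t) := by
      intro t; simp only [hsdef, Function.iterate_succ_apply']
    have hcases : ∀ t, (s (t+1) = ((s t).1 + 1, 0) ∧ (s t).2 + 1 = ii (Y (s t).1)) ∨
        (s (t+1) = ((s t).1, (s t).2 + 1) ∧ (s t).2 + 1 ≠ ii (Y (s t).1)) := by
      intro t
      rw [hsS t]
      by_cases h : (s t).2 + 1 = ii (Y (s t).1)
      · left; exact ⟨by simp only [hTdef, if_pos h], h⟩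
      · right; exact ⟨by simp only [hTdef, if_neg h], h⟩
    have I1 : ∀ t, (s t).2 < ii (Y (s t).1) := by
      intro t
      induction t with
      | zero => rw [hs0]; exact hii1 (Y 0)
      | succ t ih =>
        rcases hcases t with ⟨h, he⟩ | ⟨h, he⟩
        · rw [h]; exact hii1 _
        · rw [h]
          show (s t).2 + 1 < ii (Y (s t).1)
          exact lt_of_le_of_ne (Nat.succ_le_of_lt ih) he
    set u : ℕ → Fin p → ℝ := fun t => ν (Y (s t).1) (s t).2 with hudef
    have I2 : ∀ t, traj f x0 u t = traj f (Y (s t).1) (ν (Y (s t).1)) (s t).2 := by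
      intro t
      induction t with
      | zero => rw [hs0]; rfl
      | succ t ih =>
        have hstep1 : traj f x0 u (t + 1)
            = traj f (Y (s t).1) (ν (Y (s t).1)) ((s t).2 + 1) := by
          show f (traj f x0 u t) (u t) = _
          rw [ih]
          rfl
        rcases hcases t with ⟨h, he⟩ | ⟨h, he⟩
        · rw [hstep1, h, he]
          show traj f (Y (s t).1) (ν (Y (s t).1)) (ii (Y (s t).1)) = Y ((s t).1 + 1)
          rw [hYS]
        · rw [hstep1, h]
    have hIIm : ∀ t, (s t).2 < m := fun t => lt_of_lt_of_le (I1 t) (hiim _)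
    have hfeasU : ∀ t, u t ∈ U := fun t => (hfeas (Y (s t).1) (s t).2 (hIIm t)).1
    have hfeasX : ∀ t, traj f x0 u (t + 1) ∈ X := by
      intro t
      have h2 : traj f x0 u (t + 1)
          = traj f (Y (s t).1) (ν (Y (s t).1)) ((s t).2 + 1) := by
        show f (traj f x0 u t) (u t) = _
        rw [I2 t]; rfl
      rw [h2]
      exact (hfeas (Y (s t).1) (s t).2 (hIIm t)).2
    have hVbd : ∀ t, V (traj f x0 u t) ≤ C * V (Y (s t).1) := by
      intro t
      rw [I2 t]
      exact hbd (Y (s t).1) (s t).2 (hIIm t).le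
    have hYdec : ∀ k, V (Y (k + 1)) ≤ V (Y k) - α (Y k) := by
      intro k; rw [hYS k]; exact hdec (Y k)
    have hYanti : Antitone (fun k => V (Y k)) := antitone_nat_of_succ_le fun k => by
      have := hYdec k; have := hα0 (Y k); linarith
    have hYVx0 : ∀ k, V (Y k) ≤ V x0 := fun k => by
      have := hYanti (Nat.zero_le k); simpa [hY0] using this
    obtain ⟨R, hR⟩ := hαru (V x0 + 1)
    have hYbd : ∀ k, ‖Y k‖ ≤ R := by
      intro k
      by_contra h
      push_neg at h
      have h1 := hR (Y k) h.le
      have h2 := hαV (Y k)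
      have h3 := hYVx0 k
      linarith
    have hbdd : BddBelow (Set.range fun k => V (Y k)) :=
      ⟨0, by rintro x ⟨k, rfl⟩; exact hV0 _⟩
    have hL := tendsto_atTop_ciInf hYanti hbdd
    have hαY0 : Tendsto (fun k => α (Y k)) atTop (nhds 0) := by
      have h1 : Tendsto (fun k => V (Y k) - V (Y (k + 1))) atTop (nhds 0) := by
        have := hL.sub (hL.comp (tendsto_add_atTop_nat 1))
        simpa using this
      exact squeeze_zero (fun k => hα0 _) (fun k => by have := hYdec k; linarith) h1
    have hYtend : Tendsto Y atTop (nhds 0) := aux_tendsto hαc hαpd Y R hYbd hαY0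
    have hVY0 : Tendsto (fun k => V (Y k)) atTop (nhds 0) := by
      have := (hVc.tendsto 0).comp hYtend
      simpa [hVpd.1, Function.comp_def] using this
    have hbmono : Monotone (fun t => (s t).1) := monotone_nat_of_le_succ fun t => by
      rcases hcases t with ⟨h, _⟩ | ⟨h, _⟩ <;> simp [h]
    have hclaim : ∀ r t, ((s (t + r)).1 = (s t).1 ∧ (s (t + r)).2 = (s t).2 + r) ∨
        (s t).1 + 1 ≤ (s (t + r)).1 := by
      intro r
      induction r with
      | zero => intro t; left; exact ⟨rfl, rfl⟩
      | succ r ih =>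
        intro t
        rw [show t + (r + 1) = t + r + 1 from rfl]
        rcases ih t with ⟨h1, h2⟩ | h1
        · rcases hcases (t + r) with ⟨h, _⟩ | ⟨h, _⟩
          · right
            show (s t).1 + 1 ≤ (s (t + r + 1)).1
            rw [h, h1]
          · left
            constructor
            · show (s (t + r + 1)).1 = (s t).1
              rw [h]; exact h1
            · show (s (t + r + 1)).2 = (s t).2 + (r + 1)
              rw [h]; simp; omega
        · right
          have : (s (t + r)).1 ≤ (s (t + r + 1)).1 := hbmono (Nat.le_succ _)
          omega
    have hgrow : ∀ t, (s t).1 + 1 ≤ (s (t + m)).1 := by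
      intro t
      rcases hclaim m t with ⟨h1, h2⟩ | h1
      · exfalso
        have hx := hIIm (t + m)
        omega
      · exact h1
    have hbub : ∀ N, N ≤ (s (N * m)).1 := by
      intro N
      induction N with
      | zero => exact Nat.zero_le _
      | succ N ih =>
        have h1 := hgrow (N * m)
        have h2 : (N + 1) * m = N * m + m := by ring
        rw [h2]
        omega
    have hbtop : Tendsto (fun t => (s t).1) atTop atTop :=
      tendsto_atTop_atTop_of_monotone hbmono fun N => ⟨N * m, hbub N⟩
    have hVtraj0 : Tendsto (fun t => V (traj f x0 u t)) atTop (nhds 0) := by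
      refine squeeze_zero (fun t => hV0 _) hVbd ?_
      have := (hVY0.comp hbtop).const_mul C
      simpa [Function.comp] using this
    have hαtraj0 : Tendsto (fun t => α (traj f x0 u t)) atTop (nhds 0) :=
      squeeze_zero (fun t => hα0 _) (fun t => hαV _) hVtraj0
    have hC0 : (0:ℝ) ≤ C := by linarith
    have hαCb : ∀ t, α (traj f x0 u t) ≤ C * V x0 := fun t =>
      le_trans (hαV _) (le_trans (hVbd t) (mul_le_mul_of_nonneg_left (hYVx0 _) hC0))
    obtain ⟨R2, hR2⟩ := hαru (C * V x0 + 1)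
    have htrajbd : ∀ t, ‖traj f x0 u t‖ ≤ R2 := by
      intro t
      by_contra h
      push_neg at h
      have h1 := hR2 _ h.le
      have h2 := hαCb t
      linarith
    exact ⟨u, fun k => ⟨hfeasU k, hfeasX k⟩, hαCb,
      aux_tendsto hαc hαpd _ R2 htrajbd hαtraj0⟩

  refine ⟨?_, fun x0 _ => ?_⟩
  · intro ε hε
    obtain ⟨R1, hR1⟩ := hαru 1
    obtain ⟨c, hc, hcsmall⟩ := aux_min hαc hαpd R1 ε hε
    have hc0 : 0 < min c 1 := lt_min hc one_pos
    have hC0 : (0:ℝ) < C := lt_of_lt_of_le one_pos hC1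
    have hcont : ∀ᶠ y in 𝓝 (0 : Fin n → ℝ), V y < min c 1 / C := by
      have hV : Tendsto V (𝓝 (0 : Fin n → ℝ)) (𝓝 0) := by
        simpa [hVpd.1] using hVc.tendsto (0 : Fin n → ℝ)
      exact hV.eventually_lt_const (by positivity)
    obtain ⟨δ, hδ, hball⟩ := Metric.eventually_nhds_iff_ball.mp hcont
    refine ⟨δ, hδ, fun x0 _ _ hx0δ => ?_⟩
    obtain ⟨u, hfe, hαb, htend⟩ := main x0
    have hVx0 : V x0 < min c 1 / C :=
      hball x0 (by simpa [Metric.mem_ball, dist_zero_right] using hx0δ)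
    have hCVx0 : C * V x0 < min c 1 := by
      have h1 := (lt_div_iff₀ hC0).mp hVx0
      nlinarith
    have hsmall : ∀ k, α (traj f x0 u k) < min c 1 := fun k =>
      lt_of_le_of_lt (hαb k) hCVx0
    refine ⟨u, hfe, fun k => ?_, htend⟩
    have h1 : α (traj f x0 u k) < 1 := lt_of_lt_of_le (hsmall k) (min_le_right _ _)
    have h2 : ‖traj f x0 u k‖ ≤ R1 := by
      by_contra h
      push_neg at h
      exact absurd (hR1 _ h.le) (by linarith)
    exact hcsmall _ h2 (lt_of_lt_of_le (hsmall k) (min_le_left _ _))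
  · obtain ⟨u, hfe, _, htend⟩ := main x0
    exact ⟨u, hfe, htend⟩
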